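/- For 0 < ζ₁ ≤ 1 and ζ₂ ≥ 0, the conditional-nulling error probability satisfies P_m^CN(ζ₁,ζ₂) ≤ (1/2)·(m-1)·ζ₁·ζ₂ for all m ≥ 1. -/

import Mathlib

lemma aux_pow (x : ℝ) (hx : 0 ≤ x) (hx1 : x ≤ 1) :
    ∀ m : ℕ, (1 - x) ^ m ≤ 1 - (m : ℝ) * x + (m : ℝ) * ((m : ℝ) - 1) / 2 * x ^ 2 := by
  intro m
  induction m with
  | zero => norm_num
  | succ n ih =>
      have h0 : (0:ℝ) ≤ 1 - x := by linarith
      have hnn : (0:ℝ) ≤ (n : ℝ) * ((n : ℝ) - 1) := by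
        rcases Nat.eq_zero_or_pos n with h | h
        · simp [h]
        · have : (1:ℝ) ≤ (n : ℝ) := by exact_mod_cast h
          nlinarith
      have hc : (0:ℝ) ≤ (n : ℝ) * ((n : ℝ) - 1) * x ^ 3 :=
        mul_nonneg hnn (pow_nonneg hx 3)
      have h2 := mul_le_mul_of_nonneg_left ih h0
      push_cast
      calc (1 - x) ^ (n + 1) = (1 - x) * (1 - x) ^ n := by ring
        _ ≤ (1 - x) * (1 - (n : ℝ) * x + (n : ℝ) * ((n : ℝ) - 1) / 2 * x ^ 2) := h2
        _ ≤ 1 - ((n : ℝ) + 1) * x + ((n : ℝ) + 1) * (((n : ℝ) + 1) - 1) / 2 * x ^ 2 := by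
            nlinarith [hc]

theorem stmt_3 (ζ₁ ζ₂ : ℝ) (h1 : 0 < ζ₁) (h1' : ζ₁ ≤ 1) (h2 : 0 ≤ ζ₂) :
    ∀ m : ℕ, 1 ≤ m →
      (1 / (m : ℝ)) * (ζ₂ / ζ₁) * ((m : ℝ) * ζ₁ + (1 - ζ₁) ^ m - 1)
        ≤ (1 / 2) * ((m : ℝ) - 1) * ζ₁ * ζ₂ := by
  intro m hm
  have hm' : (1:ℝ) ≤ (m:ℝ) := by exact_mod_cast hm
  have hmpos : (0:ℝ) < m := by linarith
  have key : (1 - ζ₁) ^ m ≤ 1 - (m : ℝ) * ζ₁ + (m : ℝ) * ((m : ℝ) - 1) / 2 * ζ₁ ^ 2 :=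
    aux_pow ζ₁ h1.le h1' m
  have hA : (m : ℝ) * ζ₁ + (1 - ζ₁) ^ m - 1 ≤ (m : ℝ) * ((m : ℝ) - 1) / 2 * ζ₁ ^ 2 := by
    linarith [key]
  have hpos : (0:ℝ) ≤ 1 / (m : ℝ) * (ζ₂ / ζ₁) := by positivity
  calc (1 / (m : ℝ)) * (ζ₂ / ζ₁) * ((m : ℝ) * ζ₁ + (1 - ζ₁) ^ m - 1)
      ≤ (1 / (m : ℝ)) * (ζ₂ / ζ₁) * ((m : ℝ) * ((m : ℝ) - 1) / 2 * ζ₁ ^ 2) :=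
        mul_le_mul_of_nonneg_left hA hpos
    _ = (1 / 2) * ((m : ℝ) - 1) * ζ₁ * ζ₂ := by
        field_simp
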